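/- Let ρ and σ be two n-qubit quantum states. Then max{trace ρ², trace σ²} · TV(p_ρ, p_σ) ≤ 2·‖ρ − σ‖₁, where TV(p, q) := (1/2)·∑_{a ∈ (Fin n → Fin 4)} |p(a) − q(a)| is the total variation distance. -/

import Mathlib

open Matrix Kronecker
open scoped ComplexOrder

noncomputable def pauli1 : Fin 4 → Matrix (Fin 2) (Fin 2) ℂ
  | 0 => !![1, 0; 0, 1]
  | 1 => !![0, 1; 1, 0]
  | 2 => !![0, -Complex.I; Complex.I, 0]
  | 3 => !![1, 0; 0, -1]

noncomputable def PauliOp {n : ℕ} (a : Fin n → Fin 4) :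
    Matrix (Fin n → Fin 2) (Fin n → Fin 2) ℂ :=
  Matrix.of fun z z' => ∏ i, pauli1 (a i) (z i) (z' i)

/-- The trace norm of a matrix: the trace of the positive semidefinite square root of `Aᴴ * A`. -/
noncomputable def traceNorm {m : Type*} [Fintype m] [DecidableEq m]
    (A : Matrix m m ℂ) : ℝ :=
  (((Matrix.posSemidef_conjTranspose_mul_self A).isHermitian.eigenvectorUnitary : Matrix m m ℂ) *
    Matrix.diagonal (((↑) : ℝ → ℂ) ∘ Real.sqrt ∘ (Matrix.posSemidef_conjTranspose_mul_self A).isHermitian.eigenvalues) *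
    (star (Matrix.posSemidef_conjTranspose_mul_self A).isHermitian.eigenvectorUnitary : Matrix m m ℂ)).trace.re

/-- A quantum state: positive semidefinite with unit trace. -/
structure IsState {m : Type*} [Fintype m] (ρ : Matrix m m ℂ) : Prop where
  posSemidef : ρ.PosSemidef
  trace_one : ρ.trace = 1

/-- Pauli expectation value `⟨P_a⟩_ρ`. -/
noncomputable def pExp {n : ℕ} (ρ : Matrix (Fin n → Fin 2) (Fin n → Fin 2) ℂ)
    (a : Fin n → Fin 4) : ℝ := ((PauliOp a * ρ).trace).re

/-- The purity `tr ρ²`. -/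
noncomputable def purity {m : Type*} [Fintype m] (ρ : Matrix m m ℂ) : ℝ :=
  ((ρ * ρ).trace).re

/-- The Pauli distribution `p_ρ`. -/
noncomputable def pDist {n : ℕ} (ρ : Matrix (Fin n → Fin 2) (Fin n → Fin 2) ℂ)
    (a : Fin n → Fin 4) : ℝ := (pExp ρ a) ^ 2 / (2 ^ n * purity ρ)

/-- The cumulative distribution function `F_ρ`. -/
noncomputable def cdf {n : ℕ} (ρ : Matrix (Fin n → Fin 2) (Fin n → Fin 2) ℂ)
    (ε : ℝ) : ℝ := ∑ a : Fin n → Fin 4, if (pExp ρ a) ^ 2 ≤ ε then pDist ρ a else 0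

/-- The maximally entangled state `|Φ₀⟩`. -/
noncomputable def Phi0 (n : ℕ) : (Fin n → Fin 2) × (Fin n → Fin 2) → ℂ :=
  fun p => if p.1 = p.2 then (↑(Real.sqrt (2 ^ n)))⁻¹ else 0

/-- The Bell state `|Φ_a⟩ = (1 ⊗ P_a)|Φ₀⟩`. -/
noncomputable def BellVec {n : ℕ} (a : Fin n → Fin 4) :
    (Fin n → Fin 2) × (Fin n → Fin 2) → ℂ :=
  ((1 : Matrix (Fin n → Fin 2) (Fin n → Fin 2) ℂ) ⊗ₖ PauliOp a).mulVec (Phi0 n)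

/-- The Bell distribution `q_ρ(a) = ⟨Φ_a| ρ ⊗ ρ |Φ_a⟩`. -/
noncomputable def qDist {n : ℕ} (ρ : Matrix (Fin n → Fin 2) (Fin n → Fin 2) ℂ)
    (a : Fin n → Fin 4) : ℝ :=
  (star (BellVec a) ⬝ᵥ ((ρ ⊗ₖ ρ).mulVec (BellVec a))).re

/-- The W state. -/
noncomputable def Wstate (n : ℕ) : (Fin n → Fin 2) → ℂ :=
  fun z => if (∑ i, (z i : ℕ)) = 1 then (↑(Real.sqrt n))⁻¹ else 0

/-- The W state projector `|W_n⟩⟨W_n|`. -/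
noncomputable def Wproj (n : ℕ) : Matrix (Fin n → Fin 2) (Fin n → Fin 2) ℂ :=
  Matrix.vecMulVec (Wstate n) (star (Wstate n))

lemma pauli1_herm (c : Fin 4) : (pauli1 c).IsHermitian := by
  fin_cases c <;>
    · ext i j
      fin_cases i <;> fin_cases j <;>
        simp [pauli1, Matrix.conjTranspose_apply, Complex.ext_iff]

lemma pauli1_complete (i j k l : Fin 2) :
    ∑ c : Fin 4, pauli1 c i j * pauli1 c k l = if i = l ∧ j = k then 2 else 0 := by
  fin_cases i <;> fin_cases j <;> fin_cases k <;> fin_cases l <;>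
    norm_num [pauli1, Fin.sum_univ_four, Complex.ext_iff]

lemma pauliOp_herm {n : ℕ} (a : Fin n → Fin 4) : (PauliOp a).IsHermitian := by
  ext z z'
  simp only [PauliOp, Matrix.conjTranspose_apply, Matrix.of_apply, star_prod]
  congr 1
  ext i
  exact congrFun (congrFun (pauli1_herm (a i)) (z i)) (z' i)

lemma pauliSum {n : ℕ} (z z' w w' : Fin n → Fin 2) :
    ∑ a : Fin n → Fin 4, PauliOp a z z' * PauliOp a w w'
      = if z = w' ∧ z' = w then (2:ℂ)^n else 0 := by
  have h1 : ∀ a : Fin n → Fin 4, PauliOp a z z' * PauliOp a w w'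
      = ∏ i, (pauli1 (a i) (z i) (z' i) * pauli1 (a i) (w i) (w' i)) := by
    intro a; simp [PauliOp, Finset.prod_mul_distrib]
  simp_rw [h1]
  rw [← Fintype.prod_sum (fun i (c : Fin 4) => pauli1 c (z i) (z' i) * pauli1 c (w i) (w' i))]
  simp_rw [pauli1_complete]
  by_cases h : z = w' ∧ z' = w
  · simp only [h, if_true]
    have : ∀ i, (if z i = w' i ∧ z' i = w i then (2:ℂ) else 0) = 2 := by
      intro i; rw [if_pos ⟨congrFun h.1 i, congrFun h.2 i⟩]
    simp [this]
  · rw [if_neg h]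
    rw [not_and_or] at h
    have : ∃ i, ¬(z i = w' i ∧ z' i = w i) := by
      rcases h with h | h
      · obtain ⟨i, hi⟩ := Function.ne_iff.mp h
        exact ⟨i, fun hc => hi hc.1⟩
      · obtain ⟨i, hi⟩ := Function.ne_iff.mp h
        exact ⟨i, fun hc => hi hc.2⟩
    obtain ⟨i, hi⟩ := this
    exact Finset.prod_eq_zero (Finset.mem_univ i) (if_neg hi)

lemma key {n : ℕ} (A B : Matrix (Fin n → Fin 2) (Fin n → Fin 2) ℂ) :
    ∑ a : Fin n → Fin 4, (PauliOp a * A).trace * (PauliOp a * B).trace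
      = 2 ^ n * (A * B).trace := by
  have expand : ∀ a : Fin n → Fin 4,
      (PauliOp a * A).trace * (PauliOp a * B).trace
        = ∑ z, ∑ w, ∑ z', ∑ w',
            PauliOp a z z' * PauliOp a w w' * (A z' z * B w' w) := by
    intro a
    simp only [Matrix.trace, Matrix.diag, Matrix.mul_apply]
    rw [Finset.sum_mul_sum]
    refine Finset.sum_congr rfl fun z _ => ?_
    refine Finset.sum_congr rfl fun w _ => ?_
    rw [Finset.sum_mul_sum]
    refine Finset.sum_congr rfl fun z' _ => Finset.sum_congr rfl fun w' _ => by ring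
  simp_rw [expand]
  rw [Finset.sum_comm]
  have swap2 : ∀ (f : (Fin n → Fin 4) → (Fin n → Fin 2) → (Fin n → Fin 2) → (Fin n → Fin 2) → ℂ),
      ∑ a : Fin n → Fin 4, ∑ w, ∑ z', ∑ w', f a w z' w'
        = ∑ w, ∑ z', ∑ w', ∑ a, f a w z' w' := by
    intro f
    rw [Finset.sum_comm]
    refine Finset.sum_congr rfl fun w _ => ?_
    rw [Finset.sum_comm]
    refine Finset.sum_congr rfl fun z' _ => ?_
    rw [Finset.sum_comm]
  have step : ∀ z, (∑ a : Fin n → Fin 4, ∑ w, ∑ z', ∑ w',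
      PauliOp a z z' * PauliOp a w w' * (A z' z * B w' w))
        = ∑ w, ∑ z', ∑ w', (if z = w' ∧ z' = w then (2:ℂ)^n else 0) * (A z' z * B w' w) := by
    intro z
    rw [swap2]
    refine Finset.sum_congr rfl fun w _ => Finset.sum_congr rfl fun z' _ =>
      Finset.sum_congr rfl fun w' _ => ?_
    rw [← Finset.sum_mul, pauliSum]
  simp_rw [step, ite_mul, zero_mul, ite_and]
  simp only [Finset.sum_ite_eq, Finset.sum_ite_eq', Finset.mem_univ, if_true]
  rw [Finset.sum_comm]
  simp only [Matrix.trace, Matrix.diag, Matrix.mul_apply, Finset.mul_sum]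

lemma trace_pauli_im {n : ℕ} {A : Matrix (Fin n → Fin 2) (Fin n → Fin 2) ℂ}
    (hA : A.IsHermitian) (a : Fin n → Fin 4) :
    ((PauliOp a * A).trace).im = 0 := by
  have : star ((PauliOp a * A).trace) = (PauliOp a * A).trace := by
    rw [← Matrix.trace_conjTranspose, Matrix.conjTranspose_mul, hA.eq,
      (pauliOp_herm a).eq, Matrix.trace_mul_comm]
  have := congrArg Complex.im this
  simp only [Complex.star_def, Complex.conj_im] at this
  linarith

lemma key_re {n : ℕ} {A B : Matrix (Fin n → Fin 2) (Fin n → Fin 2) ℂ}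
    (hA : A.IsHermitian) :
    ∑ a : Fin n → Fin 4, pExp A a * pExp B a = 2 ^ n * ((A * B).trace).re := by
  have h := congrArg Complex.re (key A B)
  rw [Complex.re_sum] at h
  have h2 : ∀ a : Fin n → Fin 4,
      ((PauliOp a * A).trace * (PauliOp a * B).trace).re = pExp A a * pExp B a := by
    intro a
    rw [Complex.mul_re, trace_pauli_im hA, zero_mul, sub_zero]; rfl
  simp_rw [h2] at h
  rw [h]
  have : ((2:ℂ) ^ n * (A * B).trace).re = 2 ^ n * ((A * B).trace).re := by
    have : ((2:ℂ)^n) = (((2:ℝ)^n : ℝ) : ℂ) := by push_cast; ring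
    rw [this, Complex.re_ofReal_mul]
  rw [this]

section eig
variable {m : Type*} [Fintype m] [DecidableEq m] {M : Matrix m m ℂ}

lemma traceNorm_eq_cfc (A : Matrix m m ℂ) :
    traceNorm A = (cfc Real.sqrt (Aᴴ * A)).trace.re := by
  rw [(Matrix.posSemidef_conjTranspose_mul_self A).isHermitian.cfc_eq, Matrix.IsHermitian.cfc,
    Unitary.conjStarAlgAut_apply]
  rfl

lemma trace_conj_diag (U : Matrix.unitaryGroup m ℂ) (d : m → ℂ) :
    ((U : Matrix m m ℂ) * Matrix.diagonal d * (star (U : Matrix m m ℂ))).trace = ∑ i, d i := by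
  rw [Matrix.trace_mul_comm, ← Matrix.mul_assoc]
  rw [show star (U : Matrix m m ℂ) * (U : Matrix m m ℂ) = 1 from
    Matrix.UnitaryGroup.star_mul_self U]
  rw [Matrix.one_mul, Matrix.trace_diagonal]

lemma trace_eq_sum_eig (hM : M.IsHermitian) :
    M.trace = ∑ i, (hM.eigenvalues i : ℂ) := by
  conv_lhs => rw [hM.spectral_theorem, Unitary.conjStarAlgAut_apply]
  rw [trace_conj_diag]
  rfl

lemma conj_diag_mul_conj_diag (U : Matrix.unitaryGroup m ℂ) (d e : m → ℂ) :
    ((U : Matrix m m ℂ) * Matrix.diagonal d * (star (U : Matrix m m ℂ))) *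
      ((U : Matrix m m ℂ) * Matrix.diagonal e * (star (U : Matrix m m ℂ)))
    = (U : Matrix m m ℂ) * Matrix.diagonal (fun i => d i * e i) * (star (U : Matrix m m ℂ)) := by
  have h1 : star (U : Matrix m m ℂ) * (U : Matrix m m ℂ) = 1 :=
    Matrix.UnitaryGroup.star_mul_self U
  calc ((U : Matrix m m ℂ) * Matrix.diagonal d * (star (U : Matrix m m ℂ))) *
      ((U : Matrix m m ℂ) * Matrix.diagonal e * (star (U : Matrix m m ℂ)))
      = (U : Matrix m m ℂ) * Matrix.diagonal d *
        ((star (U : Matrix m m ℂ)) * (U : Matrix m m ℂ)) * Matrix.diagonal e *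
        (star (U : Matrix m m ℂ)) := by
        simp only [Matrix.mul_assoc]
    _ = (U : Matrix m m ℂ) * (Matrix.diagonal d * Matrix.diagonal e) *
        (star (U : Matrix m m ℂ)) := by rw [h1]; simp only [Matrix.mul_one, Matrix.mul_assoc]
    _ = _ := by rw [Matrix.diagonal_mul_diagonal]

lemma trace_sq_eq_sum_eig (hM : M.IsHermitian) :
    (M * M).trace = ∑ i, ((hM.eigenvalues i : ℂ))^2 := by
  conv_lhs => rw [hM.spectral_theorem, Unitary.conjStarAlgAut_apply]
  rw [conj_diag_mul_conj_diag, trace_conj_diag]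
  simp [sq]

lemma purity_eq_sum_eig (hM : M.IsHermitian) :
    purity M = ∑ i, (hM.eigenvalues i)^2 := by
  have := congrArg Complex.re (trace_sq_eq_sum_eig hM)
  rw [Complex.re_sum] at this
  simp only [← Complex.ofReal_pow, Complex.ofReal_re] at this
  exact this

lemma traceNorm_herm_eq (hM : M.IsHermitian) :
    traceNorm M = ∑ i, |hM.eigenvalues i| := by
  set U : Matrix.unitaryGroup m ℂ := hM.eigenvectorUnitary
  set B : Matrix m m ℂ :=
    (U : Matrix m m ℂ) * Matrix.diagonal (fun i => ((|hM.eigenvalues i| : ℝ) : ℂ)) *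
      (star (U : Matrix m m ℂ)) with hBdef
  have hBpsd : B.PosSemidef := by
    have hd : (Matrix.diagonal (fun i => ((|hM.eigenvalues i| : ℝ) : ℂ))).PosSemidef := by
      rw [Matrix.posSemidef_diagonal_iff]
      intro i
      rw [show ((|hM.eigenvalues i| : ℝ) : ℂ) = RCLike.ofReal |hM.eigenvalues i| from rfl]
      exact Complex.zero_le_real.2 (abs_nonneg _)
    have := hd.mul_mul_conjTranspose_same (U : Matrix m m ℂ)
    rw [hBdef]
    simpa [Matrix.star_eq_conjTranspose] using this
  have hBsq : B ^ 2 = Mᴴ * M := by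
    rw [hM.eq, sq, hBdef, conj_diag_mul_conj_diag]
    conv_rhs => rw [hM.spectral_theorem, Unitary.conjStarAlgAut_apply, conj_diag_mul_conj_diag]
    have hfun : (fun i => ((|hM.eigenvalues i| : ℝ) : ℂ) * ((|hM.eigenvalues i| : ℝ) : ℂ))
        = fun i => (RCLike.ofReal ∘ hM.eigenvalues) i * (RCLike.ofReal ∘ hM.eigenvalues) i := by
      funext i
      show ((|hM.eigenvalues i| : ℝ) : ℂ) * ((|hM.eigenvalues i| : ℝ) : ℂ)
        = ((hM.eigenvalues i : ℝ) : ℂ) * ((hM.eigenvalues i : ℝ) : ℂ)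
      rw [← Complex.ofReal_mul, ← Complex.ofReal_mul, ← abs_mul, abs_mul_self]
    rw [hfun]
  have hBeq : B = cfc Real.sqrt (Mᴴ * M) := by
    rw [hM.eq, ← sq, ← cfc_comp_pow (R := ℝ) Real.sqrt 2 M (ha := hM.isSelfAdjoint)]
    simp_rw [Real.sqrt_sq_eq_abs]
    rw [hM.cfc_eq, Matrix.IsHermitian.cfc, Unitary.conjStarAlgAut_apply]
    rfl
  rw [traceNorm_eq_cfc, ← hBeq, hBdef, trace_conj_diag, Complex.re_sum]
  simp

end eig

lemma traceNorm_neg {m : Type*} [Fintype m] [DecidableEq m] (A : Matrix m m ℂ) :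
    traceNorm (-A) = traceNorm A := by
  rw [traceNorm_eq_cfc, traceNorm_eq_cfc]
  simp

lemma purity_pos {m : Type*} [Fintype m] [DecidableEq m] {ρ : Matrix m m ℂ}
    (h : IsState ρ) : 0 < purity ρ := by
  have hH := h.posSemidef.1
  have htr := h.trace_one
  rw [trace_eq_sum_eig hH] at htr
  rw [purity_eq_sum_eig hH]
  by_contra hle
  push_neg at hle
  have h0 : ∑ i, (hH.eigenvalues i)^2 = 0 :=
    le_antisymm hle (Finset.sum_nonneg fun i _ => sq_nonneg _)
  have hz := (Finset.sum_eq_zero_iff_of_nonneg (fun i _ => sq_nonneg (hH.eigenvalues i))).1 h0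
  have hzz : ∀ i, (hH.eigenvalues i : ℂ) = 0 := by
    intro i
    have := pow_eq_zero_iff (two_ne_zero) |>.1 (hz i (Finset.mem_univ i))
    simp [this]
  rw [Finset.sum_congr rfl (fun i _ => hzz i)] at htr
  simp at htr

lemma purity_le_traceNorm_sq {m : Type*} [Fintype m] [DecidableEq m] {M : Matrix m m ℂ}
    (hM : M.IsHermitian) : purity M ≤ (traceNorm M)^2 := by
  rw [purity_eq_sum_eig hM, traceNorm_herm_eq hM]
  calc ∑ i, (hM.eigenvalues i)^2 = ∑ i, |hM.eigenvalues i|^2 := by simp [sq_abs]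
    _ ≤ (∑ i, |hM.eigenvalues i|)^2 :=
        Finset.sum_sq_le_sq_sum_of_nonneg fun i _ => abs_nonneg _

lemma purity_add_le {m : Type*} [Fintype m] [DecidableEq m] {ρ σ : Matrix m m ℂ}
    (hρ : IsState ρ) (hσ : IsState σ) : purity (ρ + σ) ≤ 4 := by
  have hpsd := hρ.posSemidef.add hσ.posSemidef
  have hH := hpsd.1
  rw [purity_eq_sum_eig hH]
  have h1 : ∑ i, (hH.eigenvalues i)^2 ≤ (∑ i, hH.eigenvalues i)^2 :=
    Finset.sum_sq_le_sq_sum_of_nonneg fun i _ => hpsd.eigenvalues_nonneg i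
  have htr : ∑ i, hH.eigenvalues i = 2 := by
    have h2 := trace_eq_sum_eig hH
    rw [Matrix.trace_add, hρ.trace_one, hσ.trace_one] at h2
    have h3 := congrArg Complex.re h2
    rw [Complex.re_sum] at h3
    rw [show ((1:ℂ)+1) = 2 by norm_num] at h3
    simpa using h3.symm
  rw [htr] at h1
  linarith

lemma pExp_sub {n : ℕ} (ρ σ : Matrix (Fin n → Fin 2) (Fin n → Fin 2) ℂ) (a : Fin n → Fin 4) :
    pExp (ρ - σ) a = pExp ρ a - pExp σ a := by
  simp [pExp, Matrix.mul_sub, Complex.sub_re]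

lemma pExp_add {n : ℕ} (ρ σ : Matrix (Fin n → Fin 2) (Fin n → Fin 2) ℂ) (a : Fin n → Fin 4) :
    pExp (ρ + σ) a = pExp ρ a + pExp σ a := by
  simp [pExp, Matrix.mul_add, Complex.add_re]

lemma key_re_self {n : ℕ} {A : Matrix (Fin n → Fin 2) (Fin n → Fin 2) ℂ}
    (hA : A.IsHermitian) :
    ∑ a : Fin n → Fin 4, (pExp A a)^2 = 2^n * purity A := by
  have h := key_re (A := A) (B := A) hA
  simp_rw [pow_two]
  exact h

lemma main_aux {n : ℕ} (ρ σ : Matrix (Fin n → Fin 2) (Fin n → Fin 2) ℂ)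
    (hρ : IsState ρ) (hσ : IsState σ) (hYX : purity σ ≤ purity ρ) :
    purity ρ * ((1 / 2) * ∑ a : Fin n → Fin 4, |pDist ρ a - pDist σ a|)
      ≤ 2 * traceNorm (ρ - σ) := by
  have hN0 : (0:ℝ) < 2 ^ n := by positivity
  have hY0 : 0 < purity σ := purity_pos hσ
  have hX0 : 0 < purity ρ := purity_pos hρ
  have hHd : (ρ - σ).IsHermitian := hρ.posSemidef.1.sub hσ.posSemidef.1
  have hT0 : 0 ≤ traceNorm (ρ - σ) := by
    rw [traceNorm_herm_eq hHd]
    exact Finset.sum_nonneg fun i _ => abs_nonneg _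
  have hXsum : ∑ a : Fin n → Fin 4, (pExp ρ a)^2 = 2^n * purity ρ :=
    key_re_self hρ.posSemidef.1
  have hYsum : ∑ a : Fin n → Fin 4, (pExp σ a)^2 = 2^n * purity σ :=
    key_re_self hσ.posSemidef.1
  have hdsum : ∑ a : Fin n → Fin 4, (pExp ρ a - pExp σ a)^2
      ≤ 2^n * traceNorm (ρ - σ)^2 := by
    have h := key_re_self hHd
    simp_rw [pExp_sub] at h
    rw [h]
    exact mul_le_mul_of_nonneg_left (purity_le_traceNorm_sq hHd) hN0.le
  have hssum : ∑ a : Fin n → Fin 4, (pExp ρ a + pExp σ a)^2 ≤ 2^n * 4 := by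
    have h := key_re_self (hρ.posSemidef.1.add hσ.posSemidef.1)
    simp_rw [pExp_add] at h
    rw [h]
    exact mul_le_mul_of_nonneg_left (purity_add_le hρ hσ) hN0.le
  have hS0 : (0:ℝ) ≤ ∑ a : Fin n → Fin 4, |(pExp ρ a)^2 - (pExp σ a)^2| :=
    Finset.sum_nonneg fun a _ => abs_nonneg _
  have hS_le : ∑ a : Fin n → Fin 4, |(pExp ρ a)^2 - (pExp σ a)^2|
      ≤ 2 * 2^n * traceNorm (ρ - σ) := by
    have hCS := Finset.sum_mul_sq_le_sq_mul_sq Finset.univ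
      (fun a : Fin n → Fin 4 => |pExp ρ a - pExp σ a|) (fun a => |pExp ρ a + pExp σ a|)
    simp_rw [← abs_mul, sq_abs] at hCS
    have hterm : ∀ a : Fin n → Fin 4, |(pExp ρ a)^2 - (pExp σ a)^2|
        = |(pExp ρ a - pExp σ a) * (pExp ρ a + pExp σ a)| := by
      intro a; congr 1; ring
    have h1 : (∑ a : Fin n → Fin 4, |(pExp ρ a)^2 - (pExp σ a)^2|)^2
        ≤ (2^n * traceNorm (ρ - σ)^2) * (2^n * 4) := by
      calc (∑ a : Fin n → Fin 4, |(pExp ρ a)^2 - (pExp σ a)^2|)^2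
          = (∑ a : Fin n → Fin 4,
              |(pExp ρ a - pExp σ a) * (pExp ρ a + pExp σ a)|)^2 := by
            congr 1; exact Finset.sum_congr rfl fun a _ => hterm a
        _ ≤ (∑ a : Fin n → Fin 4, (pExp ρ a - pExp σ a)^2) *
            (∑ a : Fin n → Fin 4, (pExp ρ a + pExp σ a)^2) := hCS
        _ ≤ (2^n * traceNorm (ρ - σ)^2) * (2^n * 4) := by
            refine mul_le_mul hdsum hssum (Finset.sum_nonneg fun a _ => sq_nonneg _) ?_
            positivity
    have h2 : (∑ a : Fin n → Fin 4, |(pExp ρ a)^2 - (pExp σ a)^2|)^2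
        ≤ (2 * 2^n * traceNorm (ρ - σ))^2 := by nlinarith [h1]
    have h3 := Real.sqrt_le_sqrt h2
    rwa [Real.sqrt_sq hS0,
      Real.sqrt_sq (mul_nonneg (mul_nonneg two_pos.le hN0.le) hT0)] at h3
  have hXY : purity ρ - purity σ
      ≤ (∑ a : Fin n → Fin 4, |(pExp ρ a)^2 - (pExp σ a)^2|) / 2^n := by
    rw [le_div_iff₀ hN0]
    have h1 : (purity ρ - purity σ) * 2^n
        = ∑ a : Fin n → Fin 4, ((pExp ρ a)^2 - (pExp σ a)^2) := by
      rw [Finset.sum_sub_distrib, hXsum, hYsum]; ring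
    rw [h1]
    exact Finset.sum_le_sum fun a _ => le_abs_self _
  have h1XY : (1:ℝ) ≤ purity ρ / purity σ := (one_le_div hY0).2 hYX
  have hpt : ∀ a : Fin n → Fin 4, purity ρ * |pDist ρ a - pDist σ a|
      ≤ (|(pExp ρ a)^2 - (pExp σ a)^2|
          + (purity ρ / purity σ - 1) * (pExp σ a)^2) / 2^n := by
    intro a
    have hmul : purity ρ * (pDist ρ a - pDist σ a)
        = ((pExp ρ a)^2 - (purity ρ / purity σ) * (pExp σ a)^2) / 2^n := by
      rw [pDist, pDist]
      field_simp
    calc purity ρ * |pDist ρ a - pDist σ a|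
        = |purity ρ * (pDist ρ a - pDist σ a)| := by
          rw [abs_mul, abs_of_pos hX0]
      _ = |(pExp ρ a)^2 - (purity ρ / purity σ) * (pExp σ a)^2| / 2^n := by
          rw [hmul, abs_div, abs_of_pos hN0]
      _ ≤ (|(pExp ρ a)^2 - (pExp σ a)^2|
            + (purity ρ / purity σ - 1) * (pExp σ a)^2) / 2^n := by
          gcongr
          have hre : (pExp ρ a)^2 - (purity ρ / purity σ) * (pExp σ a)^2
              = ((pExp ρ a)^2 - (pExp σ a)^2)
                - ((purity ρ / purity σ - 1) * (pExp σ a)^2) := by ring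
          rw [hre]
          refine (abs_sub _ _).trans ?_
          rw [abs_of_nonneg (mul_nonneg (sub_nonneg.2 h1XY) (sq_nonneg _))]
  have hsum_pt : purity ρ * (∑ a : Fin n → Fin 4, |pDist ρ a - pDist σ a|)
      ≤ ((∑ a : Fin n → Fin 4, |(pExp ρ a)^2 - (pExp σ a)^2|)
          + (purity ρ / purity σ - 1) * (2^n * purity σ)) / 2^n := by
    rw [Finset.mul_sum]
    refine (Finset.sum_le_sum fun a _ => hpt a).trans_eq ?_
    rw [← Finset.sum_div]
    congr 1
    rw [Finset.sum_add_distrib, ← Finset.mul_sum, hYsum]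
  have hmain : purity ρ * (∑ a : Fin n → Fin 4, |pDist ρ a - pDist σ a|)
      ≤ 4 * traceNorm (ρ - σ) := by
    have e1 : ((∑ a : Fin n → Fin 4, |(pExp ρ a)^2 - (pExp σ a)^2|)
          + (purity ρ / purity σ - 1) * (2^n * purity σ)) / 2^n
        = (∑ a : Fin n → Fin 4, |(pExp ρ a)^2 - (pExp σ a)^2|) / 2^n
          + (purity ρ - purity σ) := by
      field_simp
    have e3 : (∑ a : Fin n → Fin 4, |(pExp ρ a)^2 - (pExp σ a)^2|) / 2^n
        + (∑ a : Fin n → Fin 4, |(pExp ρ a)^2 - (pExp σ a)^2|) / 2^n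
        ≤ 4 * traceNorm (ρ - σ) := by
      rw [← add_div, div_le_iff₀ hN0]
      nlinarith [hS_le]
    rw [e1] at hsum_pt
    linarith
  calc purity ρ * ((1 / 2) * ∑ a : Fin n → Fin 4, |pDist ρ a - pDist σ a|)
      = (1/2) * (purity ρ * ∑ a : Fin n → Fin 4, |pDist ρ a - pDist σ a|) := by ring
    _ ≤ (1/2) * (4 * traceNorm (ρ - σ)) := by linarith [hmain]
    _ = 2 * traceNorm (ρ - σ) := by ring

/-- `max{tr ρ², tr σ²} · TV(p_ρ, p_σ) ≤ 2‖ρ − σ‖₁`. -/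
theorem stmt_4 {n : ℕ} (hn : 1 ≤ n)
    (ρ σ : Matrix (Fin n → Fin 2) (Fin n → Fin 2) ℂ)
    (hρ : IsState ρ) (hσ : IsState σ) :
    max (purity ρ) (purity σ) *
      ((1 / 2) * ∑ a : Fin n → Fin 4, |pDist ρ a - pDist σ a|)
      ≤ 2 * traceNorm (ρ - σ) := by
  rcases le_total (purity σ) (purity ρ) with h | h
  · rw [max_eq_left h]
    exact main_aux ρ σ hρ hσ h
  · rw [max_eq_right h]
    have habs : ∑ a : Fin n → Fin 4, |pDist ρ a - pDist σ a|
        = ∑ a : Fin n → Fin 4, |pDist σ a - pDist ρ a| :=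
      Finset.sum_congr rfl fun a _ => abs_sub_comm _ _
    rw [habs, show ρ - σ = -(σ - ρ) from (neg_sub σ ρ).symm, traceNorm_neg]
    exact main_aux σ ρ hσ hρ h
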